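/- Let A be a unital C*-algebra and S ⊆ A an operator system with C*(S) = A. If a unital *-representation π of A has the strong Korovkin rigidity property with respect to S, and σ is another unital *-representation of A with ker σ = ker π, then σ also has the strong Korovkin rigidity property with respect to S. -/

import Mathlib

set_option linter.unusedSectionVars false
set_option synthInstance.maxHeartbeats 1000000
set_option maxHeartbeats 1000000


/- Common definitions: nets, completely positive maps, operator systems,
   representations, boundary representations, tight extensions, Korovkin properties. -/

open scoped ComplexOrder

noncomputable section

/-- A nonempty directed relation, serving as the index of a net. -/
def DirectedRel {ι : Type*} (r : ι → ι → Prop) : Prop :=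
  Nonempty ι ∧ (∀ i, r i i) ∧ (∀ i j k, r i j → r j k → r i k) ∧
    ∀ i j, ∃ k, r i k ∧ r j k

/-- Norm convergence of a net indexed by a directed relation. -/
def NetTendsto {ι X : Type*} [SeminormedAddCommGroup X] (r : ι → ι → Prop)
    (f : ι → X) (x : X) : Prop :=
  ∀ ε : ℝ, 0 < ε → ∃ i₀, ∀ i, r i₀ i → ‖f i - x‖ < ε

/-- Weak convergence of a net in a normed space: convergence against every
continuous linear functional. -/
def WeakNetTendsto {ι : Type*} {X : Type*} [NormedAddCommGroup X] [NormedSpace ℂ X]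
    (r : ι → ι → Prop) (f : ι → X) (x : X) : Prop :=
  ∀ φ : StrongDual ℂ X, ∀ ε : ℝ, 0 < ε → ∃ i₀, ∀ i, r i₀ i → ‖φ (f i) - φ x‖ < ε

/-- A positive matrix over a unital C*-algebra: one of the form `star b * b`. -/
def MatPos {R : Type*} [Ring R] [StarRing R] {n : ℕ}
    (m : Matrix (Fin n) (Fin n) R) : Prop :=
  ∃ b : Matrix (Fin n) (Fin n) R, m = star b * b

/-- A unital completely positive map between unital star algebras (intended:
unital C*-algebras). -/
def IsUCP {A B : Type*} [Ring A] [StarRing A] [Algebra ℂ A]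
    [Ring B] [StarRing B] [Algebra ℂ B] (ψ : A →ₗ[ℂ] B) : Prop :=
  ψ 1 = 1 ∧ ∀ (n : ℕ) (m : Matrix (Fin n) (Fin n) A), MatPos m → MatPos (m.map ψ)

/-- A unital completely positive map defined on an operator system `E ⊆ A`. -/
def IsUCPOn {A B : Type*} [Ring A] [StarRing A] [Algebra ℂ A]
    [Ring B] [StarRing B] [Algebra ℂ B] (E : Submodule ℂ A) (ψ : ↥E →ₗ[ℂ] B) : Prop :=
  (∃ h1 : (1 : A) ∈ E, ψ ⟨1, h1⟩ = 1) ∧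
    ∀ (n : ℕ) (m : Matrix (Fin n) (Fin n) ↥E),
      MatPos (m.map (fun x => (x : A))) → MatPos (m.map ψ)

/-- An operator system: a unital, self-adjoint, norm-closed subspace. -/
structure IsOperatorSystem {A : Type*} [CStarAlgebra A] (S : Submodule ℂ A) : Prop where
  one_mem : (1 : A) ∈ S
  star_mem : ∀ s ∈ S, star s ∈ S
  isClosed : IsClosed (S : Set A)

/-- `S` generates `A` as a C*-algebra: the smallest closed star subalgebra
containing `S` is all of `A`. -/
def GeneratesCStar {A : Type*} [CStarAlgebra A] (S : Submodule ℂ A) : Prop :=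
  (StarAlgebra.adjoin ℂ (S : Set A)).topologicalClosure = ⊤

section Reps

variable {A : Type*} [Ring A] [StarRing A] [Algebra ℂ A]
variable {H : Type*} [NormedAddCommGroup H] [InnerProductSpace ℂ H] [CompleteSpace H]

/-- The unique extension property of a representation `π` with respect to an
operator system `S`: the only unital completely positive map agreeing with `π`
on `S` is `π` itself. -/
def HasUEP (S : Submodule ℂ A) (π : A →⋆ₐ[ℂ] (H →L[ℂ] H)) : Prop :=
  ∀ ψ : A →ₗ[ℂ] (H →L[ℂ] H), IsUCP ψ → (∀ s ∈ S, ψ s = π s) → ∀ a, ψ a = π a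

/-- An irreducible representation (on a nonzero Hilbert space): the commutant of
the range is trivial. -/
def IsIrreducibleRep (π : A →⋆ₐ[ℂ] (H →L[ℂ] H)) : Prop :=
  (∃ ξ : H, ξ ≠ 0) ∧
    ∀ T : H →L[ℂ] H, (∀ a, π a * T = T * π a) → ∃ c : ℂ, T = c • (1 : H →L[ℂ] H)

/-- A boundary representation for `S`: an irreducible representation with the
unique extension property with respect to `S`. -/
def IsBoundaryRep (S : Submodule ℂ A) (π : A →⋆ₐ[ℂ] (H →L[ℂ] H)) : Prop :=
  IsIrreducibleRep π ∧ HasUEP S π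

/-- The double commutant of a set of operators. -/
def DoubleCommutant (s : Set (H →L[ℂ] H)) : Set (H →L[ℂ] H) :=
  Set.centralizer (Set.centralizer s)

/-- The unique tight extension property: the only unital completely positive map
`ψ : A → π(A)''` agreeing with `π` on `S` is `π` itself. -/
def HasUniqueTightExt (S : Submodule ℂ A) (π : A →⋆ₐ[ℂ] (H →L[ℂ] H)) : Prop :=
  ∀ ψ : A →ₗ[ℂ] (H →L[ℂ] H), IsUCP ψ →
    (∀ a, ψ a ∈ DoubleCommutant (Set.range ⇑π)) →
    (∀ s ∈ S, ψ s = π s) → ∀ a, ψ a = π a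

/-- The strong Korovkin rigidity property of `π` with respect to `S`: every net of
unital completely positive maps `A → π(A)` converging to `π` in norm pointwise on `S`
converges to `π` in norm pointwise on `A`. -/
def StrongKorovkin (S : Submodule ℂ A) (π : A →⋆ₐ[ℂ] (H →L[ℂ] H)) : Prop :=
  ∀ (ι : Type) (r : ι → ι → Prop), DirectedRel r →
    ∀ ψ : ι → (A →ₗ[ℂ] (H →L[ℂ] H)), (∀ i, IsUCP (ψ i)) →
      (∀ i a, ψ i a ∈ Set.range ⇑π) →
      (∀ s ∈ S, NetTendsto r (fun i => ψ i s) (π s)) →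
      ∀ a, NetTendsto r (fun i => ψ i a) (π a)

/-- The (weak) Korovkin rigidity property of `π` with respect to `S`: every net of
unital completely positive maps `A → π(A)` converging to `π` weakly pointwise on `S`
converges to `π` weakly pointwise on `A`. -/
def WeakKorovkin (S : Submodule ℂ A) (π : A →⋆ₐ[ℂ] (H →L[ℂ] H)) : Prop :=
  ∀ (ι : Type) (r : ι → ι → Prop), DirectedRel r →
    ∀ ψ : ι → (A →ₗ[ℂ] (H →L[ℂ] H)), (∀ i, IsUCP (ψ i)) →
      (∀ i a, ψ i a ∈ Set.range ⇑π) →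
      (∀ s ∈ S, WeakNetTendsto r (fun i => ψ i s) (π s)) →
      ∀ a, WeakNetTendsto r (fun i => ψ i a) (π a)

end Reps

/-- The (weak) Korovkin rigidity property of the identity representation of `A`. -/
def WeakKorovkinId {A : Type*} [CStarAlgebra A] (S : Submodule ℂ A) : Prop :=
  ∀ (ι : Type) (r : ι → ι → Prop), DirectedRel r →
    ∀ ψ : ι → (A →ₗ[ℂ] A), (∀ i, IsUCP (ψ i)) →
      (∀ s ∈ S, WeakNetTendsto r (fun i => ψ i s) s) →
      ∀ a, WeakNetTendsto r (fun i => ψ i a) a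

/-- The strong Korovkin rigidity property of the identity representation of `A`. -/
def StrongKorovkinId {A : Type*} [CStarAlgebra A] (S : Submodule ℂ A) : Prop :=
  ∀ (ι : Type) (r : ι → ι → Prop), DirectedRel r →
    ∀ ψ : ι → (A →ₗ[ℂ] A), (∀ i, IsUCP (ψ i)) →
      (∀ s ∈ S, NetTendsto r (fun i => ψ i s) s) →
      ∀ a, NetTendsto r (fun i => ψ i a) a

/-- A state on a unital star algebra, as a bare function (positive linear
functionals on a C*-algebra are automatically continuous). -/
def IsStateFun {B : Type*} [Ring B] [StarRing B] [Algebra ℂ B] (ω : B → ℂ) : Prop :=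
  (∀ x y, ω (x + y) = ω x + ω y) ∧ (∀ (c : ℂ) (x), ω (c • x) = c * ω x) ∧
    ω 1 = 1 ∧ ∀ x, 0 ≤ ω (star x * x)

/-- A pure state: an extreme point of the state space. -/
def IsPureStateFun {B : Type*} [Ring B] [StarRing B] [Algebra ℂ B] (ω : B → ℂ) : Prop :=
  IsStateFun ω ∧ ∀ φ₁ φ₂ : B → ℂ, IsStateFun φ₁ → IsStateFun φ₂ →
    ∀ c : ℝ, 0 < c → c < 1 →
      (∀ x, ω x = (c : ℂ) * φ₁ x + ((1 : ℂ) - (c : ℂ)) * φ₂ x) → φ₁ = ω ∧ φ₂ = ω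

end

namespace Stmt12Aux

noncomputable section

open ContinuousLinearMap

variable {K : Type} [NormedAddCommGroup K] [InnerProductSpace ℂ K] [CompleteSpace K]

variable (K) in
abbrev En (n : ℕ) : Type := PiLp 2 (fun _ : Fin n => K)

instance (n : ℕ) : CompleteSpace (En K n) :=
  inferInstance

def incl (n : ℕ) (k : Fin n) : K →L[ℂ] En K n :=
  LinearIsometry.toContinuousLinearMap
    { toLinearMap := (WithLp.linearEquiv 2 ℂ (∀ _ : Fin n, K)).symm.toLinearMap ∘ₗ
        LinearMap.single ℂ (fun _ : Fin n => K) k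
      norm_map' := fun x => PiLp.norm_toLp_single 2 (fun _ : Fin n => K) k x }

lemma incl_apply {n : ℕ} (k : Fin n) (v : K) (j : Fin n) :
    incl n k v j = if j = k then v else 0 := by
  exact Pi.single_apply (M := K) k v j

lemma norm_coord_le {n : ℕ} (x : En K n) (k : Fin n) : ‖x k‖ ≤ ‖x‖ := by
  have h1 : ‖x k‖ ^ 2 ≤ ‖x‖ ^ 2 := by
    rw [PiLp.norm_sq_eq_of_L2]
    exact Finset.single_le_sum (f := fun i => ‖x i‖ ^ 2) (fun i _ => by positivity)
      (Finset.mem_univ k)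
  nlinarith [norm_nonneg (x k), norm_nonneg x]

def prj (n : ℕ) (k : Fin n) : En K n →L[ℂ] K :=
  LinearMap.mkContinuous (PiLp.projₗ 2 (fun _ : Fin n => K) k) 1
    (fun x => by simpa using norm_coord_le x k)

@[simp] lemma prj_apply {n : ℕ} (k : Fin n) (x : En K n) : prj n k x = x k := rfl

lemma norm_prj_le (n : ℕ) (k : Fin n) : ‖prj (K := K) n k‖ ≤ 1 :=
  LinearMap.mkContinuous_norm_le _ zero_le_one _

lemma norm_incl_le (n : ℕ) (k : Fin n) : ‖incl (K := K) n k‖ ≤ 1 :=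
  LinearIsometry.norm_toContinuousLinearMap_le _

lemma adjoint_incl (n : ℕ) (k : Fin n) :
    ContinuousLinearMap.adjoint (incl (K := K) n k) = prj n k := by
  symm
  rw [ContinuousLinearMap.eq_adjoint_iff]
  intro x y
  rw [PiLp.inner_apply, Finset.sum_eq_single k]
  · simp [incl_apply]
  · intro j _ hj
    simp [incl_apply, hj]
  · simp

lemma adjoint_prj (n : ℕ) (k : Fin n) :
    ContinuousLinearMap.adjoint (prj (K := K) n k) = incl n k := by
  rw [← adjoint_incl, ContinuousLinearMap.adjoint_adjoint]

section MatToOp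

variable {n : ℕ}

lemma piLp_sum_apply {ι' : Type*} (s : Finset ι') (f : ι' → En K n) (j : Fin n) :
    (∑ i ∈ s, f i) j = ∑ i ∈ s, f i j := by
  let L : En K n →ₗ[ℂ] K := PiLp.projₗ 2 (fun _ : Fin n => K) j
  exact map_sum L f s

def matToOp (M : Matrix (Fin n) (Fin n) (K →L[ℂ] K)) : En K n →L[ℂ] En K n :=
  ∑ k, ∑ l, (incl n k).comp ((M k l).comp (prj n l))

lemma matToOp_apply (M : Matrix (Fin n) (Fin n) (K →L[ℂ] K)) (x : En K n) (j : Fin n) :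
    matToOp M x j = ∑ l, M j l (x l) := by
  have h1 : matToOp M x = ∑ k, ∑ l, incl n k (M k l (x l)) := by
    simp [matToOp, ContinuousLinearMap.sum_apply, ContinuousLinearMap.comp_apply]
  rw [h1, piLp_sum_apply]
  have h2 : ∀ k : Fin n, (∑ l, incl n k (M k l (x l))) j
      = ∑ l, (if j = k then M k l (x l) else 0) := by
    intro k
    rw [piLp_sum_apply]
    exact Finset.sum_congr rfl fun l _ => incl_apply k _ j
  simp_rw [h2]
  rw [Finset.sum_comm]
  apply Finset.sum_congr rfl
  intro l _
  simp

lemma matToOp_ext {T U : En K n →L[ℂ] En K n}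
    (h : ∀ (x : En K n) (j : Fin n), T x j = U x j) : T = U := by
  ext x j
  exact h x j

lemma matToOp_one : matToOp (1 : Matrix (Fin n) (Fin n) (K →L[ℂ] K)) = 1 := by
  apply matToOp_ext
  intro x j
  rw [matToOp_apply]
  have : ∀ l : Fin n, (1 : Matrix (Fin n) (Fin n) (K →L[ℂ] K)) j l (x l)
      = if j = l then x l else 0 := by
    intro l
    rw [Matrix.one_apply]
    by_cases h : j = l <;> simp [h]
  simp_rw [this]
  simp

lemma matToOp_zero : matToOp (0 : Matrix (Fin n) (Fin n) (K →L[ℂ] K)) = 0 := by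
  apply matToOp_ext
  intro x j
  rw [matToOp_apply]
  simp

lemma matToOp_add (M N : Matrix (Fin n) (Fin n) (K →L[ℂ] K)) :
    matToOp (M + N) = matToOp M + matToOp N := by
  apply matToOp_ext
  intro x j
  rw [ContinuousLinearMap.add_apply, PiLp.add_apply, matToOp_apply, matToOp_apply,
    matToOp_apply, ← Finset.sum_add_distrib]
  simp [Matrix.add_apply]

lemma matToOp_smul (c : ℂ) (M : Matrix (Fin n) (Fin n) (K →L[ℂ] K)) :
    matToOp (c • M) = c • matToOp M := by
  apply matToOp_ext
  intro x j
  rw [ContinuousLinearMap.smul_apply, PiLp.smul_apply, matToOp_apply, matToOp_apply,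
    Finset.smul_sum]
  simp [Matrix.smul_apply]

lemma matToOp_mul (M N : Matrix (Fin n) (Fin n) (K →L[ℂ] K)) :
    matToOp (M * N) = matToOp M * matToOp N := by
  apply matToOp_ext
  intro x j
  rw [ContinuousLinearMap.mul_apply, matToOp_apply, matToOp_apply]
  have h1 : ∀ l : Fin n, (M * N) j l (x l) = ∑ i, M j i (N i l (x l)) := by
    intro l
    rw [Matrix.mul_apply, ContinuousLinearMap.sum_apply]
    rfl
  simp_rw [h1]
  rw [Finset.sum_comm]
  apply Finset.sum_congr rfl
  intro i _
  rw [← map_sum (M j i)]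
  congr 1
  rw [matToOp_apply]

lemma matToOp_star (M : Matrix (Fin n) (Fin n) (K →L[ℂ] K)) :
    matToOp (star M) = star (matToOp M) := by
  rw [ContinuousLinearMap.star_eq_adjoint]
  have hadj : ContinuousLinearMap.adjoint (matToOp M)
      = ∑ k, ∑ l, ContinuousLinearMap.adjoint ((incl n k).comp ((M k l).comp (prj n l))) := by
    rw [matToOp, map_sum]
    exact Finset.sum_congr rfl fun k _ => map_sum _ _ _
  rw [hadj, matToOp, Finset.sum_comm]
  apply Finset.sum_congr rfl
  intro l _
  apply Finset.sum_congr rfl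
  intro k _
  rw [ContinuousLinearMap.adjoint_comp, ContinuousLinearMap.adjoint_comp,
    adjoint_incl, adjoint_prj]
  have hst : star M k l = ContinuousLinearMap.adjoint (M l k) := by
    rw [Matrix.star_apply, ContinuousLinearMap.star_eq_adjoint]
  rw [hst]
  ext v
  rfl

lemma prj_matToOp_incl (M : Matrix (Fin n) (Fin n) (K →L[ℂ] K)) (k l : Fin n) :
    (prj n k).comp ((matToOp M).comp (incl n l)) = M k l := by
  ext v
  rw [ContinuousLinearMap.comp_apply, ContinuousLinearMap.comp_apply, prj_apply,
    matToOp_apply, Finset.sum_eq_single l]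
  · rw [incl_apply]
    simp
  · intro j _ hj
    rw [incl_apply]
    simp [hj]
  · simp

lemma matToOp_injective : Function.Injective (matToOp (K := K) (n := n)) := by
  intro M N h
  ext k l v
  have := prj_matToOp_incl M k l
  rw [h, prj_matToOp_incl] at this
  rw [← this]

lemma matToOp_reconstruct (T : En K n →L[ℂ] En K n) :
    matToOp (Matrix.of fun k l => (prj n k).comp (T.comp (incl n l))) = T := by
  apply matToOp_ext
  intro x j
  rw [matToOp_apply]
  have h1 : ∀ l : Fin n, (Matrix.of fun k l => (prj n k).comp (T.comp (incl n l))) j l (x l)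
      = (T (incl n l (x l))) j := fun l => rfl
  simp_rw [h1]
  rw [← piLp_sum_apply, ← map_sum]
  have hx : (∑ l, incl n l (x l)) = x := by
    apply PiLp.ext
    intro j'
    rw [piLp_sum_apply, Finset.sum_eq_single j']
    · rw [incl_apply]; simp
    · intro b _ hb
      rw [incl_apply]
      simp [Ne.symm hb]
    · simp
  rw [hx]

lemma norm_entry_le_matToOp (M : Matrix (Fin n) (Fin n) (K →L[ℂ] K)) (k l : Fin n) :
    ‖M k l‖ ≤ ‖matToOp M‖ := by
  calc ‖M k l‖ = ‖(prj n k).comp ((matToOp M).comp (incl n l))‖ := by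
        rw [prj_matToOp_incl]
    _ ≤ ‖prj (K := K) n k‖ * ‖(matToOp M).comp (incl n l)‖ :=
        ContinuousLinearMap.opNorm_comp_le _ _
    _ ≤ ‖prj (K := K) n k‖ * (‖matToOp M‖ * ‖incl (K := K) n l‖) :=
        mul_le_mul_of_nonneg_left (ContinuousLinearMap.opNorm_comp_le _ _)
          (ContinuousLinearMap.opNorm_nonneg _)
    _ ≤ 1 * (‖matToOp M‖ * 1) := by
        apply mul_le_mul (norm_prj_le n k) ?_ (by positivity) zero_le_one
        exact mul_le_mul_of_nonneg_left (norm_incl_le n l) (ContinuousLinearMap.opNorm_nonneg _)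
    _ = ‖matToOp M‖ := by ring

lemma norm_matToOp_le (M : Matrix (Fin n) (Fin n) (K →L[ℂ] K)) :
    ‖matToOp M‖ ≤ ∑ k, ∑ l, ‖M k l‖ := by
  refine (norm_sum_le _ _).trans ?_
  apply Finset.sum_le_sum
  intro k _
  refine (norm_sum_le _ _).trans ?_
  apply Finset.sum_le_sum
  intro l _
  calc ‖(incl n k).comp ((M k l).comp (prj n l))‖
      ≤ ‖incl (K := K) n k‖ * ‖(M k l).comp (prj n l)‖ :=
        ContinuousLinearMap.opNorm_comp_le _ _
    _ ≤ ‖incl (K := K) n k‖ * (‖M k l‖ * ‖prj (K := K) n l‖) :=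
        mul_le_mul_of_nonneg_left (ContinuousLinearMap.opNorm_comp_le _ _)
          (ContinuousLinearMap.opNorm_nonneg _)
    _ ≤ 1 * (‖M k l‖ * 1) := by
        apply mul_le_mul (norm_incl_le n k) ?_ (by positivity) zero_le_one
        exact mul_le_mul_of_nonneg_left (norm_prj_le n l) (ContinuousLinearMap.opNorm_nonneg _)
    _ = ‖M k l‖ := by ring

def matToOpA (K : Type) [NormedAddCommGroup K] [InnerProductSpace ℂ K] [CompleteSpace K]
    (n : ℕ) : Matrix (Fin n) (Fin n) (K →L[ℂ] K) →ₐ[ℂ] (En K n →L[ℂ] En K n) where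
  toFun := matToOp
  map_one' := matToOp_one
  map_mul' := matToOp_mul
  map_zero' := matToOp_zero
  map_add' := matToOp_add
  commutes' := fun c => by
    rw [Algebra.algebraMap_eq_smul_one, Algebra.algebraMap_eq_smul_one]
    show matToOp (c • 1) = c • 1
    rw [matToOp_smul, matToOp_one]

lemma nontrivial_En (hn : 0 < n) [Nontrivial K] : Nontrivial (En K n) := by
  obtain ⟨x, y, hxy⟩ := exists_pair_ne K
  refine ⟨incl n ⟨0, hn⟩ x, incl n ⟨0, hn⟩ y, fun h => hxy ?_⟩
  have := congrArg (fun z : En K n => z ⟨0, hn⟩) h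
  simpa [incl_apply] using this

end MatToOp

section NormEq

variable {A : Type} [CStarAlgebra A]
variable {H : Type} [NormedAddCommGroup H] [InnerProductSpace ℂ H] [CompleteSpace H]
variable {H' : Type} [NormedAddCommGroup H'] [InnerProductSpace ℂ H'] [CompleteSpace H']

lemma starAlgHom_continuous (π : A →⋆ₐ[ℂ] (H →L[ℂ] H)) : Continuous π :=
  AddMonoidHomClass.continuous_of_bound π 1
    (fun x => by simpa using NonUnitalStarAlgHom.norm_apply_le π x)

lemma norm_le_of_ker (π : A →⋆ₐ[ℂ] (H →L[ℂ] H)) (σ : A →⋆ₐ[ℂ] (H' →L[ℂ] H'))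
    (hker : ∀ a : A, π a = 0 → σ a = 0) (a : A) : ‖σ a‖ ≤ ‖π a‖ := by
  have key : ∀ y : A, IsSelfAdjoint y → ‖σ y‖ ≤ ‖π y‖ := by
    intro y hy
    rcases subsingleton_or_nontrivial (H →L[ℂ] H) with hS | hS
    · have h0 : σ y = 0 := hker y (Subsingleton.elim _ _)
      simp [h0]
    have hHnt : Nontrivial H := by
      by_contra hcon
      rw [not_nontrivial_iff_subsingleton] at hcon
      exact (not_nontrivial_iff_subsingleton.mpr inferInstance) hS
    by_contra hlt
    push_neg at hlt
    set r := ‖π y‖ with hr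
    have hr0 : (0 : ℝ) ≤ r := norm_nonneg _
    set f : ℝ → ℝ := fun t => max (|t| - r) 0 with hf
    have hfc : Continuous f := by fun_prop
    have hπy : IsSelfAdjoint (π y) := hy.map π
    have hσy : IsSelfAdjoint (σ y) := hy.map σ
    have h1 : π (cfc f y) = cfc f (π y) :=
      StarAlgHom.map_cfc π f y (hφ := starAlgHom_continuous π)
    have h2 : σ (cfc f y) = cfc f (σ y) :=
      StarAlgHom.map_cfc σ f y (hφ := starAlgHom_continuous σ)
    have h3 : cfc f (π y) = 0 := by
      have heq : (spectrum ℝ (π y)).EqOn f 0 := by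
        intro x hx
        have hxb : |x| ≤ r := by
          have := spectrum.norm_le_norm_of_mem hx
          simpa [Real.norm_eq_abs] using this
        simp only [hf, Pi.zero_apply]
        exact max_eq_right (by linarith)
      rw [cfc_congr heq, cfc_zero]
    have h4 : σ (cfc f y) = 0 := hker _ (h1.trans h3)
    have h5 : cfc f (σ y) = 0 := h2.symm.trans h4
    have hσne : σ y ≠ 0 := by
      intro h0
      rw [h0, norm_zero] at hlt
      exact absurd hlt (not_lt.mpr hr0)
    have hnt' : Nontrivial (H' →L[ℂ] H') := nontrivial_of_ne _ _ hσne
    obtain ⟨⟨t₀, ht₀, ht₀'⟩, -⟩ :=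
      IsGreatest.norm_cfc (id : ℝ → ℝ) (σ y) (continuous_id.continuousOn) hσy
    rw [cfc_id ℝ (σ y)] at ht₀'
    have hft₀ : f t₀ > 0 := by
      simp only [hf]
      have : |t₀| = ‖σ y‖ := by simpa [Real.norm_eq_abs] using ht₀'
      rw [this]
      exact lt_max_iff.mpr (Or.inl (by linarith))
    have := norm_apply_le_norm_cfc f (σ y) ht₀ (hfc.continuousOn) hσy
    rw [h5, norm_zero] at this
    have : |f t₀| ≤ 0 := by simpa [Real.norm_eq_abs] using this
    linarith [abs_nonneg (f t₀), le_abs_self (f t₀)]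
  have hkey := key (star a * a) (.star_mul_self a)
  rw [map_mul, map_mul, map_star, map_star, CStarRing.norm_star_mul_self,
    CStarRing.norm_star_mul_self] at hkey
  nlinarith [norm_nonneg (σ a), norm_nonneg (π a)]

end NormEq

section Approx

lemma exists_poly_approx (g : ℝ → ℝ) (hg : Continuous g) (R ε : ℝ) (hε : 0 < ε) :
    ∃ p : Polynomial ℝ, ∀ x ∈ Set.Icc (-R) R, |g x - Polynomial.eval x p| ≤ ε := by
  have hdense := polynomialFunctions_closure_eq_top (-R) R
  set I : Set ℝ := Set.Icc (-R) R with hI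
  set G : C(I, ℝ) := ⟨fun x => g x, by fun_prop⟩ with hG
  have hGmem : G ∈ (polynomialFunctions I).topologicalClosure := by rw [hdense]; trivial
  have hGmem' : G ∈ closure (polynomialFunctions I : Set C(I, ℝ)) := hGmem
  obtain ⟨q, hq, hqd⟩ := Metric.mem_closure_iff.mp hGmem' ε hε
  rw [polynomialFunctions_coe] at hq
  obtain ⟨p, rfl⟩ := hq
  refine ⟨p, fun x hx => ?_⟩
  have hd := ContinuousMap.dist_apply_le_dist (f := G)
    (g := Polynomial.toContinuousMapOnAlgHom I p) ⟨x, hx⟩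
  have hGx : G ⟨x, hx⟩ = g x := rfl
  have hpx : (Polynomial.toContinuousMapOnAlgHom I p) ⟨x, hx⟩ = Polynomial.eval x p := rfl
  rw [hGx, hpx] at hd
  have : dist (g x) (Polynomial.eval x p) ≤ dist G (Polynomial.toContinuousMapOnAlgHom I p) :=
    hd
  rw [Real.dist_eq] at this
  linarith [this.trans hqd.le]

end Approx

section MatPosTransfer

variable {A : Type} [CStarAlgebra A]
variable {H : Type} [NormedAddCommGroup H] [InnerProductSpace ℂ H] [CompleteSpace H]
variable {H' : Type} [NormedAddCommGroup H'] [InnerProductSpace ℂ H'] [CompleteSpace H']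

lemma matPos_transfer (π : A →⋆ₐ[ℂ] (H →L[ℂ] H)) (σ : A →⋆ₐ[ℂ] (H' →L[ℂ] H'))
    (hker : ∀ a : A, σ a = 0 ↔ π a = 0)
    {n : ℕ} (m : Matrix (Fin n) (Fin n) A) (hm : MatPos (m.map ⇑σ)) :
    MatPos (m.map ⇑π) := by
  rcases subsingleton_or_nontrivial (H →L[ℂ] H) with hS | hS
  · exact ⟨0, Matrix.ext fun k l => Subsingleton.elim _ _⟩
  rcases Nat.eq_zero_or_pos n with hn | hn
  · subst hn; exact ⟨0, Matrix.ext fun k l => k.elim0⟩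
  have hHnt : Nontrivial H := by
    by_contra hcon
    rw [not_nontrivial_iff_subsingleton] at hcon
    haveI := hcon
    exact (not_nontrivial_iff_subsingleton.mpr inferInstance) hS
  have hS' : Nontrivial (H' →L[ℂ] H') := by
    rcases subsingleton_or_nontrivial (H' →L[ℂ] H') with h' | h'
    · exfalso
      have h1 : π 1 = 0 := (hker 1).mp (Subsingleton.elim _ _)
      rw [map_one] at h1
      exact one_ne_zero h1
    · exact h'
  have hH'nt : Nontrivial H' := by
    by_contra hcon
    rw [not_nontrivial_iff_subsingleton] at hcon
    haveI := hcon
    exact (not_nontrivial_iff_subsingleton.mpr inferInstance) hS'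
  haveI hEH : Nontrivial (En H n) := nontrivial_En hn
  haveI hEH' : Nontrivial (En H' n) := nontrivial_En hn
  have hnorm : ∀ x : A, ‖σ x‖ = ‖π x‖ := fun x =>
    le_antisymm (norm_le_of_ker π σ (fun a h => (hker a).mpr h) x)
      (norm_le_of_ker σ π (fun a h => (hker a).mp h) x)
  set Fπ : Matrix (Fin n) (Fin n) A →ₐ[ℂ] (En H n →L[ℂ] En H n) :=
    (matToOpA H n).comp (AlgHom.mapMatrix π.toAlgHom) with hFπdef
  set Fσ : Matrix (Fin n) (Fin n) A →ₐ[ℂ] (En H' n →L[ℂ] En H' n) :=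
    (matToOpA H' n).comp (AlgHom.mapMatrix σ.toAlgHom) with hFσdef
  have hFπ_apply : ∀ x : Matrix (Fin n) (Fin n) A, Fπ x = matToOp (x.map ⇑π) := fun x => rfl
  have hFσ_apply : ∀ x : Matrix (Fin n) (Fin n) A, Fσ x = matToOp (x.map ⇑σ) := fun x => rfl
  have hmapstar_π : ∀ x : Matrix (Fin n) (Fin n) A, (star x).map ⇑π = star (x.map ⇑π) := by
    intro x; ext k l
    simp [Matrix.map_apply, Matrix.star_apply, map_star]
  have hmapstar_σ : ∀ x : Matrix (Fin n) (Fin n) A, (star x).map ⇑σ = star (x.map ⇑σ) := by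
    intro x; ext k l
    simp [Matrix.map_apply, Matrix.star_apply, map_star]
  have hFπ_star : ∀ x, Fπ (star x) = star (Fπ x) := fun x => by
    rw [hFπ_apply, hFπ_apply, hmapstar_π, matToOp_star]
  have hFσ_star : ∀ x, Fσ (star x) = star (Fσ x) := fun x => by
    rw [hFσ_apply, hFσ_apply, hmapstar_σ, matToOp_star]
  have hker_n : ∀ x : Matrix (Fin n) (Fin n) A, Fσ x = 0 → Fπ x = 0 := by
    intro x hx
    have hentry : ∀ k l, σ (x k l) = 0 := by
      intro k l
      have h1 := prj_matToOp_incl (x.map ⇑σ) k l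
      rw [← hFσ_apply, hx] at h1
      simp only [ContinuousLinearMap.comp_zero, ContinuousLinearMap.zero_comp] at h1
      have : (x.map ⇑σ) k l = 0 := h1.symm
      simpa [Matrix.map_apply] using this
    have hzero : x.map ⇑π = 0 := Matrix.ext fun k l => by
      simpa [Matrix.map_apply] using (hker (x k l)).mp (hentry k l)
    rw [hFπ_apply, hzero, matToOp_zero]
  have hcmp : ∀ x : Matrix (Fin n) (Fin n) A, ‖Fπ x‖ ≤ (n : ℝ) ^ 2 * ‖Fσ x‖ := by
    intro x
    rw [hFπ_apply]
    refine (norm_matToOp_le _).trans ?_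
    have hb : ∀ k l : Fin n, ‖(x.map ⇑π) k l‖ ≤ ‖Fσ x‖ := by
      intro k l
      rw [Matrix.map_apply, ← hnorm]
      have h2 := norm_entry_le_matToOp (x.map ⇑σ) k l
      rw [← hFσ_apply] at h2
      simpa [Matrix.map_apply] using h2
    calc ∑ k, ∑ l, ‖(x.map ⇑π) k l‖ ≤ ∑ _k : Fin n, ∑ _l : Fin n, ‖Fσ x‖ :=
          Finset.sum_le_sum fun k _ => Finset.sum_le_sum fun l _ => hb k l
      _ = (n : ℝ) ^ 2 * ‖Fσ x‖ := by
          simp [Finset.sum_const, Finset.card_univ]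
          ring
  obtain ⟨b, hb⟩ := hm
  set Q := Fσ m with hQ
  have hQ_eq : Q = star (matToOp b) * matToOp b := by
    rw [hQ, hFσ_apply, hb, matToOp_mul, matToOp_star]
  have hQsa : IsSelfAdjoint Q := by rw [hQ_eq]; exact IsSelfAdjoint.star_mul_self _
  have hQspec : ∀ x ∈ spectrum ℝ Q, (0 : ℝ) ≤ x := by
    intro x hx
    rw [hQ_eq] at hx
    exact spectrum_star_mul_self_nonneg x hx
  set T := Fπ m with hT
  have hTsa : IsSelfAdjoint T := by
    have h0 : Fσ (star m - m) = 0 := by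
      rw [map_sub, hFσ_star, ← hQ, hQsa.star_eq, sub_self]
    have h1 : Fπ (star m - m) = 0 := hker_n _ h0
    rw [map_sub, hFπ_star, ← hT, sub_eq_zero] at h1
    exact h1
  have hTspec : ∀ t ∈ spectrum ℝ T, (0 : ℝ) ≤ t := by
    intro t ht
    by_contra ht0
    push_neg at ht0
    set R : ℝ := max ‖T‖ ‖Q‖ with hR
    set g : ℝ → ℝ := fun s => max (-s) 0 with hg
    have hgc : Continuous g := by fun_prop
    set C : ℝ := (n : ℝ) ^ 2 with hC
    have hC0 : (0 : ℝ) ≤ C := by positivity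
    set ε : ℝ := (-t) / (2 * (C + 1)) with hε
    have hε0 : 0 < ε := div_pos (by linarith) (by linarith)
    obtain ⟨p, hp⟩ := exists_poly_approx g hgc R ε hε0
    have hTbound : ∀ x ∈ spectrum ℝ T, x ∈ Set.Icc (-R) R := by
      intro x hx
      have h2 := spectrum.norm_le_norm_of_mem hx
      rw [Real.norm_eq_abs] at h2
      have h3 : ‖T‖ ≤ R := le_max_left _ _
      obtain ⟨h4, h5⟩ := abs_le.mp h2
      exact ⟨by linarith, by linarith⟩
    have e1 : ‖cfc g T - Polynomial.aeval T p‖ ≤ ε := by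
      rw [← cfc_polynomial p T, ← cfc_sub g (fun x => Polynomial.eval x p) T]
      apply norm_cfc_le hε0.le
      intro x hx
      simpa [Real.norm_eq_abs] using hp x (hTbound x hx)
    have e2 : ‖Polynomial.aeval T p‖ ≤ C * ε := by
      have ha : Polynomial.aeval T p = Fπ (Polynomial.aeval m p) := by
        rw [hT]
        have h9 := Polynomial.aeval_algHom_apply (Fπ.restrictScalars ℝ) m p
        simp only [AlgHom.coe_restrictScalars'] at h9
        exact h9
      rw [ha]
      refine (hcmp _).trans ?_
      have hQa : Fσ (Polynomial.aeval m p) = Polynomial.aeval Q p := by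
        rw [hQ]
        have h9 := Polynomial.aeval_algHom_apply (Fσ.restrictScalars ℝ) m p
        simp only [AlgHom.coe_restrictScalars'] at h9
        exact h9.symm
      rw [hQa]
      have hQp : ‖Polynomial.aeval Q p‖ ≤ ε := by
        rw [← cfc_polynomial p Q]
        apply norm_cfc_le hε0.le
        intro x hx
        have hx0 : (0 : ℝ) ≤ x := hQspec x hx
        have hxR : x ≤ R := by
          have h2 := spectrum.norm_le_norm_of_mem hx
          rw [Real.norm_eq_abs, abs_of_nonneg hx0] at h2
          exact h2.trans (le_max_right _ _)
        have h6 := hp x ⟨by linarith, hxR⟩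
        have hgx : g x = 0 := max_eq_right (by linarith)
        rw [hgx] at h6
        rw [Real.norm_eq_abs]
        calc |Polynomial.eval x p| = |0 - Polynomial.eval x p| := by rw [zero_sub, abs_neg]
          _ ≤ ε := h6
      exact mul_le_mul_of_nonneg_left hQp hC0
    have e3 : -t ≤ ‖cfc g T‖ := by
      have h7 := norm_apply_le_norm_cfc g T ht (hgc.continuousOn) hTsa
      have hgt : g t = -t := max_eq_left (by linarith)
      rw [hgt, Real.norm_eq_abs, abs_of_nonneg (by linarith)] at h7
      exact h7
    have e4 : -t ≤ ε + C * ε := by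
      have htri : ‖cfc g T‖ ≤ ‖cfc g T - Polynomial.aeval T p‖ + ‖Polynomial.aeval T p‖ := by
        have h8 := norm_add_le (cfc g T - Polynomial.aeval T p) (Polynomial.aeval T p)
        rwa [sub_add_cancel] at h8
      linarith [e3, htri, e1, e2]
    have hmul : ε * (2 * (C + 1)) = -t := by
      rw [hε]
      field_simp
    nlinarith [hε0, hC0, e4, hmul]
  have hs_sa : IsSelfAdjoint (cfc Real.sqrt T) := cfc_predicate Real.sqrt T
  have hTeq : T = star (cfc Real.sqrt T) * cfc Real.sqrt T := by
    rw [hs_sa.star_eq, ← cfc_mul Real.sqrt Real.sqrt T]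
    have heq : (spectrum ℝ T).EqOn (fun x => Real.sqrt x * Real.sqrt x) id := fun x hx =>
      Real.mul_self_sqrt (hTspec x hx)
    rw [cfc_congr heq, cfc_id ℝ T]
  set d : Matrix (Fin n) (Fin n) (H →L[ℂ] H) :=
    Matrix.of fun k l => (prj n k).comp ((cfc Real.sqrt T).comp (incl n l)) with hd
  refine ⟨d, matToOp_injective ?_⟩
  rw [matToOp_mul, matToOp_star, hd, matToOp_reconstruct, ← hFπ_apply m, ← hT]
  exact hTeq

end MatPosTransfer

theorem stmt_12' {A : Type} [CStarAlgebra A]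
    (S : Submodule ℂ A)
    {H : Type} [NormedAddCommGroup H] [InnerProductSpace ℂ H] [CompleteSpace H]
    {H' : Type} [NormedAddCommGroup H'] [InnerProductSpace ℂ H'] [CompleteSpace H']
    (π : A →⋆ₐ[ℂ] (H →L[ℂ] H)) (σ : A →⋆ₐ[ℂ] (H' →L[ℂ] H'))
    (hker : ∀ a : A, σ a = 0 ↔ π a = 0)
    (hπ : StrongKorovkin S π) :
    StrongKorovkin S σ := by
  intro ι r hr ψ hUCP hrange hS' a
  have hnorm : ∀ x : A, ‖σ x‖ = ‖π x‖ := fun x =>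
    le_antisymm (norm_le_of_ker π σ (fun a h => (hker a).mpr h) x)
      (norm_le_of_ker σ π (fun a h => (hker a).mp h) x)
  have wd : ∀ x y : A, σ x = σ y → π x = π y := by
    intro x y h
    have h1 : σ (x - y) = 0 := by rw [map_sub, h, sub_self]
    have h2 := (hker _).mp h1
    rwa [map_sub, sub_eq_zero] at h2
  classical
  set L : ι → A → A := fun i x => (hrange i x).choose with hL
  have hlift : ∀ i x, σ (L i x) = ψ i x := fun i x => (hrange i x).choose_spec
  set φ : ι → (A →ₗ[ℂ] (H →L[ℂ] H)) := fun i =>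
    { toFun := fun x => π (L i x)
      map_add' := fun x y => by
        rw [← map_add]
        apply wd
        rw [hlift, map_add, map_add σ (L i x) (L i y), hlift, hlift]
      map_smul' := fun c x => by
        simp only [RingHom.id_apply]
        rw [← map_smul]
        apply wd
        rw [hlift, map_smul, map_smul σ c (L i x), hlift] } with hφ
  have hφ_apply : ∀ i x, φ i x = π (L i x) := fun i x => rfl
  have hφUCP : ∀ i, IsUCP (φ i) := by
    intro i
    constructor
    · rw [hφ_apply]
      have h1 : π (L i 1) = π 1 := by
        apply wd
        rw [hlift, (hUCP i).1, map_one]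
      rw [h1, map_one]
    · intro n m hm
      have hm' : MatPos (m.map (ψ i)) := (hUCP i).2 n m hm
      have hmm : (m.map (L i)).map ⇑σ = m.map (ψ i) := by
        apply Matrix.ext
        intro k l
        simp only [Matrix.map_apply]
        exact hlift i (m k l)
      have hpos := matPos_transfer π σ hker (m.map (L i)) (by rw [hmm]; exact hm')
      have hmm2 : (m.map (L i)).map ⇑π = m.map (φ i) := by
        apply Matrix.ext
        intro k l
        simp only [Matrix.map_apply]
        rfl
      rwa [hmm2] at hpos
  have hφrange : ∀ i x, φ i x ∈ Set.range ⇑π := fun i x => ⟨L i x, rfl⟩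
  have hφS : ∀ s ∈ S, NetTendsto r (fun i => φ i s) (π s) := by
    intro s hs ε hε
    obtain ⟨i₀, hi₀⟩ := hS' s hs ε hε
    refine ⟨i₀, fun i hi => ?_⟩
    have h1 : φ i s - π s = π (L i s - s) := by rw [map_sub, hφ_apply]
    have h2 : ψ i s - σ s = σ (L i s - s) := by rw [map_sub, hlift]
    rw [h1, ← hnorm, ← h2]
    exact hi₀ i hi
  have hall := hπ ι r hr φ hφUCP hφrange hφS a
  intro ε hε
  obtain ⟨i₀, hi₀⟩ := hall ε hε
  refine ⟨i₀, fun i hi => ?_⟩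
  have h1 : ψ i a - σ a = σ (L i a - a) := by rw [map_sub, hlift]
  have h2 : π (L i a - a) = φ i a - π a := by rw [map_sub, hφ_apply]
  rw [h1, hnorm, h2]
  exact hi₀ i hi

end

end Stmt12Aux

/-- If `π` has the strong Korovkin rigidity property with respect
to `S` and `σ` is another unital *-representation with `ker σ = ker π`, then `σ`
also has the strong Korovkin rigidity property with respect to `S`. -/
theorem stmt_12 {A : Type} [CStarAlgebra A]
    (S : Submodule ℂ A) (hS : IsOperatorSystem S) (hgen : GeneratesCStar S)
    {H : Type} [NormedAddCommGroup H] [InnerProductSpace ℂ H] [CompleteSpace H]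
    {H' : Type} [NormedAddCommGroup H'] [InnerProductSpace ℂ H'] [CompleteSpace H']
    (π : A →⋆ₐ[ℂ] (H →L[ℂ] H)) (σ : A →⋆ₐ[ℂ] (H' →L[ℂ] H'))
    (hker : ∀ a : A, σ a = 0 ↔ π a = 0)
    (hπ : StrongKorovkin S π) :
    StrongKorovkin S σ :=
  Stmt12Aux.stmt_12' S π σ hker hπ
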